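/- The continuation set C is open and the stopping set S is closed (as subsets of [0,∞) × (0,∞)). Moreover C is connected in the φ variable: for all φ' > φ, if (x,φ) ∈ C then (x,φ') ∈ C. -/

import Mathlib

open MeasureTheory ProbabilityTheory Filter Set Topology
open scoped ENNReal NNReal

noncomputable section

variable {Ω : Type*}

/-- Running supremum `S_t = sup_{0 ≤ s ≤ t} (−μ₀ s − σ W_s)`. -/
def runSup (μ₀ σ : ℝ) (W : ℝ → Ω → ℝ) (t : ℝ) (ω : Ω) : ℝ :=
  ⨆ s : Icc (0 : ℝ) t, (-μ₀ * (s : ℝ) - σ * W (s : ℝ) ω)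

/-- Reflecting local time `A^x_t = max(x, S_t) − x`. -/
def locA (μ₀ σ : ℝ) (W : ℝ → Ω → ℝ) (x t : ℝ) (ω : Ω) : ℝ :=
  max x (runSup μ₀ σ W t ω) - x

/-- Reflected Brownian motion with drift `μ₀`: `X̂^x_t = x + μ₀ t + σ W_t + A^x_t`. -/
def Xhat (μ₀ σ : ℝ) (W : ℝ → Ω → ℝ) (x t : ℝ) (ω : Ω) : ℝ :=
  x + μ₀ * t + σ * W t ω + locA μ₀ σ W x t ω

/-- Signal-to-noise ratio `θ = (μ₁ − μ₀)/σ`. -/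
def snr (μ₀ μ₁ σ : ℝ) : ℝ := (μ₁ - μ₀) / σ

/-- Likelihood ratio process `Φ̂^{x,φ}_t = φ exp(θ W_t − θ²t/2 + (2θ/σ) A^x_t)`. -/
def Phihat (μ₀ μ₁ σ : ℝ) (W : ℝ → Ω → ℝ) (x φ t : ℝ) (ω : Ω) : ℝ :=
  φ * Real.exp (snr μ₀ μ₁ σ * W t ω - snr μ₀ μ₁ σ ^ 2 / 2 * t
    + 2 * snr μ₀ μ₁ σ / σ * locA μ₀ σ W x t ω)

/-- `W` is a standard Brownian motion w.r.t. the filtration `F` under `P`. -/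
structure IsBrownian [mΩ : MeasurableSpace Ω] (P : Measure Ω) (F : Filtration ℝ mΩ)
    (W : ℝ → Ω → ℝ) : Prop where
  isProb : IsProbabilityMeasure P
  start : ∀ ω, W 0 ω = 0
  cont : ∀ ω, Continuous fun t => W t ω
  adapted : Adapted F W
  incr_law : ∀ s t : ℝ, 0 ≤ s → s ≤ t →
    P.map (fun ω => W t ω - W s ω) = gaussianReal 0 (Real.toNNReal (t - s))
  incr_indep : ∀ s t : ℝ, 0 ≤ s → s ≤ t →
    Indep (MeasurableSpace.comap (fun ω => W t ω - W s ω) Real.measurableSpace) (F s) P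

/-- A (possibly infinite) stopping time of the filtration `F`. -/
def IsStoppingTimeE [mΩ : MeasurableSpace Ω] (F : Filtration ℝ mΩ) (τ : Ω → ℝ≥0∞) : Prop :=
  ∀ t : ℝ, MeasurableSet[F t] {ω | τ ω ≤ ENNReal.ofReal t}

/-- The gain `exp((2μ₀/σ²) A^x_τ − ρτ)(1 + Φ̂^{x,φ}_τ) 1_{τ<∞}`. -/
def gain (μ₀ μ₁ σ ρ : ℝ) (W : ℝ → Ω → ℝ) (x φ : ℝ) (τ : Ω → ℝ≥0∞) (ω : Ω) : ℝ :=
  if τ ω < ⊤ then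
    Real.exp (2 * μ₀ / σ ^ 2 * locA μ₀ σ W x (τ ω).toReal ω - ρ * (τ ω).toReal)
      * (1 + Phihat μ₀ μ₁ σ W x φ (τ ω).toReal ω)
  else 0

/-- The value function `Ū(x,φ)` of the optimal stopping problem. -/
def valueU [mΩ : MeasurableSpace Ω] (P : Measure Ω) (F : Filtration ℝ mΩ)
    (μ₀ μ₁ σ ρ : ℝ) (W : ℝ → Ω → ℝ) (x φ : ℝ) : ℝ :=
  sSup {r : ℝ | ∃ τ : Ω → ℝ≥0∞, IsStoppingTimeE F τ ∧
    r = ∫ ω, gain μ₀ μ₁ σ ρ W x φ τ ω ∂P}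

/-- `ζ_n = inf{t ≥ 0 : Φ̂^{x,φ}_t ≥ n}`. -/
def zetaN (μ₀ μ₁ σ : ℝ) (W : ℝ → Ω → ℝ) (n : ℕ) (x φ : ℝ) (ω : Ω) : ℝ≥0∞ :=
  sInf {t : ℝ≥0∞ | ∃ s : ℝ, 0 ≤ s ∧ t = ENNReal.ofReal s ∧
    (n : ℝ) ≤ Phihat μ₀ μ₁ σ W x φ s ω}

/-- The truncated value function `Ū^n(x,φ)`. -/
def valueUn [mΩ : MeasurableSpace Ω] (P : Measure Ω) (F : Filtration ℝ mΩ)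
    (μ₀ μ₁ σ ρ : ℝ) (W : ℝ → Ω → ℝ) (n : ℕ) (x φ : ℝ) : ℝ :=
  sSup {r : ℝ | ∃ τ : Ω → ℝ≥0∞, IsStoppingTimeE F τ ∧
    (∀ᵐ ω ∂P, τ ω ≤ zetaN μ₀ μ₁ σ W n x φ ω) ∧
    r = ∫ ω, gain μ₀ μ₁ σ ρ W x φ τ ω ∂P}

end

noncomputable section

variable {Ω : Type*}

/-- The continuation set `C = {(x,φ) ∈ [0,∞)×(0,∞) : Ū(x,φ) > 1 + φ}`. -/
def contSet [mΩ : MeasurableSpace Ω] (P : Measure Ω) (F : Filtration ℝ mΩ)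
    (μ₀ μ₁ σ ρ : ℝ) (W : ℝ → Ω → ℝ) : Set (ℝ × ℝ) :=
  {p : ℝ × ℝ | 0 ≤ p.1 ∧ 0 < p.2 ∧ 1 + p.2 < valueU P F μ₀ μ₁ σ ρ W p.1 p.2}

/-- The stopping set `S = {(x,φ) ∈ [0,∞)×(0,∞) : Ū(x,φ) = 1 + φ}`. -/
def stopSet [mΩ : MeasurableSpace Ω] (P : Measure Ω) (F : Filtration ℝ mΩ)
    (μ₀ μ₁ σ ρ : ℝ) (W : ℝ → Ω → ℝ) : Set (ℝ × ℝ) :=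
  {p : ℝ × ℝ | 0 ≤ p.1 ∧ 0 < p.2 ∧ valueU P F μ₀ μ₁ σ ρ W p.1 p.2 = 1 + p.2}

/-- `τ* = inf{t ≥ 0 : (X̂_t, Φ̂_t) ∉ C}`. -/
def tauStar [mΩ : MeasurableSpace Ω] (P : Measure Ω) (F : Filtration ℝ mΩ)
    (μ₀ μ₁ σ ρ : ℝ) (W : ℝ → Ω → ℝ) (x φ : ℝ) (ω : Ω) : ℝ≥0∞ :=
  sInf {t : ℝ≥0∞ | ∃ s : ℝ, 0 ≤ s ∧ t = ENNReal.ofReal s ∧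
    (Xhat μ₀ σ W x s ω, Phihat μ₀ μ₁ σ W x φ s ω) ∉ contSet P F μ₀ μ₁ σ ρ W}

end

noncomputable section AuxProof

open MeasureTheory

namespace BrownAux

variable {Ω : Type*}

/-! ### Measurability tools -/

lemma measurable_comp_countable [mΩ : MeasurableSpace Ω] {u : ℝ → Ω → ℝ}
    (hu : ∀ t, Measurable (u t)) {h : Ω → ℝ} (hh : Measurable h)
    (hc : (Set.range h).Countable) : Measurable fun ω => u (h ω) ω := by
  intro s hs
  have heq : (fun ω => u (h ω) ω) ⁻¹' s
      = ⋃ c ∈ Set.range h, ({ω | h ω = c} ∩ u c ⁻¹' s) := by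
    ext ω
    simp only [Set.mem_preimage, Set.mem_iUnion, Set.mem_inter_iff, Set.mem_setOf_eq,
      Set.mem_range, exists_prop]
    constructor
    · intro hω
      exact ⟨h ω, ⟨ω, rfl⟩, rfl, hω⟩
    · rintro ⟨c, -, h1, h2⟩
      rw [← h1] at h2; exact h2
  rw [heq]
  refine MeasurableSet.biUnion hc fun c _ => MeasurableSet.inter ?_ (hu c hs)
  exact hh (measurableSet_singleton c)

lemma measurable_eval_comp [mΩ : MeasurableSpace Ω] {u : ℝ → Ω → ℝ}
    (hu : ∀ t, Measurable (u t)) (hcont : ∀ ω, Continuous fun t => u t ω)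
    {g : Ω → ℝ} (hg : Measurable g) : Measurable fun ω => u (g ω) ω := by
  have hmeas : ∀ n : ℕ, Measurable fun ω => u ((⌈g ω * 2 ^ n⌉ : ℝ) / 2 ^ n) ω := by
    intro n
    refine measurable_comp_countable hu ?_ ?_
    · exact ((measurable_of_countable (fun k : ℤ => (k : ℝ))).comp
        ((hg.mul_const _).ceil)).div_const _
    · refine Set.Countable.mono ?_ (Set.countable_range fun k : ℤ => (k : ℝ) / 2 ^ n)
      rintro y ⟨ω, rfl⟩
      exact ⟨⌈g ω * 2 ^ n⌉, rfl⟩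
  apply measurable_of_tendsto_metrizable hmeas
  rw [tendsto_pi_nhds]
  intro ω
  have h2n : ∀ n : ℕ, (0:ℝ) < 2 ^ n := fun n => by positivity
  have hlow : ∀ n : ℕ, g ω ≤ (⌈g ω * 2 ^ n⌉ : ℝ) / 2 ^ n := by
    intro n
    rw [le_div_iff₀ (h2n n)]
    exact Int.le_ceil _
  have hhigh : ∀ n : ℕ, (⌈g ω * 2 ^ n⌉ : ℝ) / 2 ^ n ≤ g ω + (1/2 : ℝ) ^ n := by
    intro n
    rw [div_le_iff₀ (h2n n)]
    have h1 : ((1:ℝ)/2) ^ n * 2 ^ n = 1 := by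
      rw [div_pow, one_pow, div_mul_cancel₀]
      exact (h2n n).ne'
    have := (Int.ceil_lt_add_one (g ω * 2 ^ n)).le
    calc (⌈g ω * 2 ^ n⌉ : ℝ) ≤ g ω * 2 ^ n + 1 := this
      _ = (g ω + (1/2:ℝ) ^ n) * 2 ^ n := by rw [add_mul, h1]
  have htend : Filter.Tendsto (fun n : ℕ => (⌈g ω * 2 ^ n⌉ : ℝ) / 2 ^ n)
      Filter.atTop (nhds (g ω)) := by
    have hup : Filter.Tendsto (fun n : ℕ => g ω + (1/2:ℝ) ^ n) Filter.atTop (nhds (g ω)) := by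
      have := tendsto_pow_atTop_nhds_zero_of_lt_one (by norm_num : (0:ℝ) ≤ 1/2)
        (by norm_num : (1/2:ℝ) < 1)
      simpa using Filter.Tendsto.add (tendsto_const_nhds (x := g ω)) this
    exact tendsto_of_tendsto_of_tendsto_of_le_of_le tendsto_const_nhds hup hlow hhigh
  exact ((hcont ω).tendsto (g ω)).comp htend

/-! ### Rational supremum representation of the running supremum -/

lemma qsup_eq {v : ℝ → ℝ} (hvc : Continuous v) (hv0 : v 0 = 0) {t : ℝ} (ht : 0 ≤ t) :
    (⨆ s : Set.Icc (0:ℝ) t, v s)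
      = ⨆ q : ℚ, if (q : ℝ) ∈ Set.Icc 0 t then v q else 0 := by
  have hne : (Set.Icc (0:ℝ) t).Nonempty := Set.nonempty_Icc.2 ht
  haveI : Nonempty (Set.Icc (0:ℝ) t) := hne.to_subtype
  have hbdd : BddAbove (v '' Set.Icc 0 t) := (isCompact_Icc.image hvc).bddAbove
  have hr1 : Set.range (fun s : Set.Icc (0:ℝ) t => v s) = v '' Set.Icc 0 t := by
    ext y
    simp only [Set.mem_range, Set.mem_image]
    constructor
    · rintro ⟨⟨s, hs⟩, rfl⟩; exact ⟨s, hs, rfl⟩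
    · rintro ⟨s, hs, rfl⟩; exact ⟨⟨s, hs⟩, rfl⟩
  have hbdd1 : BddAbove (Set.range fun s : Set.Icc (0:ℝ) t => v s) := hr1 ▸ hbdd
  have hmem0 : v 0 ∈ v '' Set.Icc 0 t := ⟨0, Set.left_mem_Icc.2 ht, rfl⟩
  have hbdd2 : BddAbove (Set.range fun q : ℚ =>
      if (q : ℝ) ∈ Set.Icc 0 t then v q else 0) := by
    obtain ⟨M, hM⟩ := hbdd
    refine ⟨M, ?_⟩
    rintro y ⟨q, rfl⟩
    by_cases hq : (q : ℝ) ∈ Set.Icc 0 t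
    · simp only [hq, if_true]
      exact hM ⟨(q:ℝ), hq, rfl⟩
    · simp only [hq, if_false]
      have := hM hmem0
      rw [hv0] at this
      exact this
  apply le_antisymm
  · refine ciSup_le fun s => ?_
    have hR0 : (0:ℝ) ≤ ⨆ q : ℚ, if (q : ℝ) ∈ Set.Icc 0 t then v q else 0 := by
      have hle := le_ciSup hbdd2 (0 : ℚ)
      have h00 : (if ((0:ℚ) : ℝ) ∈ Set.Icc (0:ℝ) t then v ((0:ℚ):ℝ) else 0) = 0 := by
        simp [hv0]
      rwa [h00] at hle
    refine le_of_forall_pos_le_add fun ε hε => ?_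
    rcases eq_or_lt_of_le s.2.1 with h0s | h0s
    · have : v (s : ℝ) = 0 := by rw [← h0s, hv0]
      rw [this]; linarith
    · obtain ⟨δ, hδ, hball⟩ : ∃ δ > 0, ∀ s', |s' - (s:ℝ)| < δ → |v s' - v (s:ℝ)| < ε := by
        have := Metric.continuous_iff.1 hvc (s : ℝ) ε hε
        simpa [Real.dist_eq] using this
      obtain ⟨q, hq1, hq2⟩ := exists_rat_btwn
        (show max 0 ((s:ℝ) - δ) < (s:ℝ) from max_lt h0s (by linarith))
      have hq0 : (0:ℝ) ≤ (q:ℝ) := le_of_lt (lt_of_le_of_lt (le_max_left 0 _) hq1)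
      have hqt : (q:ℝ) ≤ t := le_trans hq2.le s.2.2
      have hnear : |(q:ℝ) - (s:ℝ)| < δ := by
        rw [abs_lt]
        constructor
        · have : (s:ℝ) - δ ≤ max 0 ((s:ℝ) - δ) := le_max_right _ _
          linarith
        · linarith
      have hvq := hball _ hnear
      have h1 : v (s:ℝ) < v (q:ℝ) + ε := by
        have := (abs_lt.1 hvq).1
        linarith
      have h2 : v (q:ℝ) ≤ ⨆ q : ℚ, if (q : ℝ) ∈ Set.Icc 0 t then v q else 0 := by
        have hle := le_ciSup hbdd2 q
        rwa [if_pos ⟨hq0, hqt⟩] at hle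
      linarith
  · refine ciSup_le fun q => ?_
    by_cases hq : (q:ℝ) ∈ Set.Icc 0 t
    · rw [if_pos hq]
      exact le_ciSup hbdd1 (⟨(q:ℝ), hq⟩ : Set.Icc (0:ℝ) t)
    · rw [if_neg hq]
      have := le_ciSup hbdd1 (⟨0, Set.left_mem_Icc.2 ht⟩ : Set.Icc (0:ℝ) t)
      rwa [hv0] at this

lemma measurable_runSup_comp [mΩ : MeasurableSpace Ω] {W : ℝ → Ω → ℝ} {μ₀ σ : ℝ}
    (hW : ∀ t, Measurable (fun ω => W t ω)) (hWc : ∀ ω, Continuous fun t => W t ω)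
    (hW0 : ∀ ω, W 0 ω = 0) {g : Ω → ℝ} (hg : Measurable g) (hg0 : ∀ ω, 0 ≤ g ω) :
    Measurable fun ω => runSup μ₀ σ W (g ω) ω := by
  have heq : (fun ω => runSup μ₀ σ W (g ω) ω)
      = fun ω => ⨆ q : ℚ, if (q : ℝ) ∈ Set.Icc 0 (g ω)
          then -μ₀ * (q:ℝ) - σ * W (q:ℝ) ω else 0 := by
    funext ω
    rw [runSup]
    exact qsup_eq (v := fun s => -μ₀ * s - σ * W s ω)
      ((continuous_const.mul continuous_id).sub (continuous_const.mul (hWc ω)))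
      (by simp [hW0 ω]) (hg0 ω)
  rw [heq]
  apply Measurable.iSup
  intro q
  apply Measurable.ite
  · have : {ω : Ω | (q:ℝ) ∈ Set.Icc 0 (g ω)}
        = {ω : Ω | (0:ℝ) ≤ (q:ℝ)} ∩ {ω : Ω | (q:ℝ) ≤ g ω} := by
      ext ω; simp [Set.mem_Icc]
    rw [this]
    exact (MeasurableSet.const _).inter (measurableSet_le measurable_const hg)
  · exact measurable_const.sub ((hW (q:ℝ)).const_mul σ)
  · exact measurable_const

lemma stoppingE_measurable [mΩ : MeasurableSpace Ω] {F : Filtration ℝ mΩ}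
    {τ : Ω → ℝ≥0∞} (hτ : IsStoppingTimeE F τ) : Measurable τ := by
  apply measurable_of_Iic
  intro a
  by_cases ha : a = ⊤
  · subst ha
    simp only [Set.Iic_top, Set.preimage_univ]
    exact MeasurableSet.univ
  · have : τ ⁻¹' Set.Iic a = {ω | τ ω ≤ ENNReal.ofReal a.toReal} := by
      ext ω; simp [Set.mem_Iic, ENNReal.ofReal_toReal ha]
    rw [this]
    exact F.le _ _ (hτ a.toReal)

lemma gain_measurable [mΩ : MeasurableSpace Ω] {P : Measure Ω} {F : Filtration ℝ mΩ}
    {W : ℝ → Ω → ℝ} (hBM : IsBrownian P F W) {μ₀ μ₁ σ ρ x φ : ℝ} {τ : Ω → ℝ≥0∞}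
    (hτ : IsStoppingTimeE F τ) : Measurable (gain μ₀ μ₁ σ ρ W x φ τ) := by
  have hW : ∀ t, Measurable (fun ω => W t ω) :=
    fun t => Measurable.mono (hBM.adapted t) (F.le t) le_rfl
  have hτm : Measurable τ := stoppingE_measurable hτ
  have hg : Measurable fun ω => (τ ω).toReal := ENNReal.measurable_toReal.comp hτm
  have hWg : Measurable fun ω => W ((τ ω).toReal) ω := measurable_eval_comp hW hBM.cont hg
  have hS : Measurable fun ω => runSup μ₀ σ W ((τ ω).toReal) ω :=
    measurable_runSup_comp hW hBM.cont hBM.start hg (fun ω => ENNReal.toReal_nonneg)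
  have hA : Measurable fun ω => locA μ₀ σ W x ((τ ω).toReal) ω := by
    unfold locA
    exact (measurable_const.max hS).sub measurable_const
  unfold gain Phihat
  apply Measurable.ite
  · exact measurableSet_lt hτm measurable_const
  · apply Measurable.mul
    · exact Real.measurable_exp.comp ((hA.const_mul _).sub (hg.const_mul _))
    · exact measurable_const.add ((Real.measurable_exp.comp
        (((hWg.const_mul _).sub (hg.const_mul _)).add (hA.const_mul _))).const_mul φ)
  · exact measurable_const

lemma gain_nonneg {W : ℝ → Ω → ℝ} {μ₀ μ₁ σ ρ x φ : ℝ} (hφ : 0 ≤ φ) (τ : Ω → ℝ≥0∞) (ω : Ω) :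
    0 ≤ gain μ₀ μ₁ σ ρ W x φ τ ω := by
  unfold gain Phihat
  split
  · positivity
  · exact le_rfl

lemma locA_nonneg {W : ℝ → Ω → ℝ} {μ₀ σ x t : ℝ} {ω : Ω} : 0 ≤ locA μ₀ σ W x t ω := by
  unfold locA
  simp [le_max_left]

lemma locA_lip {W : ℝ → Ω → ℝ} {μ₀ σ : ℝ} (x x' t : ℝ) (ω : Ω) :
    |locA μ₀ σ W x t ω - locA μ₀ σ W x' t ω| ≤ |x - x'| := by
  unfold locA
  set S := runSup μ₀ σ W t ω
  have h1 : ∀ y : ℝ, max y S - y = max (S - y) 0 := by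
    intro y
    rw [max_comm y S, ← max_sub_sub_right S y y, sub_self]
  rw [h1 x, h1 x']
  calc |max (S - x) 0 - max (S - x') 0| ≤ |(S - x) - (S - x')| := abs_max_sub_max_le_abs _ _ _
    _ = |x' - x| := by ring_nf
    _ = |x - x'| := abs_sub_comm _ _

/-- The comparison constant. -/
def Kc (μ₀ μ₁ σ : ℝ) : ℝ := |2 * μ₀ / σ ^ 2| + |2 * snr μ₀ μ₁ σ / σ|

lemma gain_le {W : ℝ → Ω → ℝ} {μ₀ μ₁ σ ρ : ℝ} {φ φ' : ℝ} (hφ : 0 < φ) (hφ' : 0 < φ')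
    (x x' : ℝ) (τ : Ω → ℝ≥0∞) (ω : Ω) :
    gain μ₀ μ₁ σ ρ W x' φ' τ ω ≤
      Real.exp (Kc μ₀ μ₁ σ * |x - x'|) * (max φ φ' / φ) * gain μ₀ μ₁ σ ρ W x φ τ ω := by
  unfold gain Phihat
  by_cases hτω : τ ω < ⊤
  · rw [if_pos hτω, if_pos hτω]
    set t := (τ ω).toReal
    set c := 2 * μ₀ / σ ^ 2 with hc
    set d := 2 * snr μ₀ μ₁ σ / σ with hd
    set A := locA μ₀ σ W x t ω
    set A' := locA μ₀ σ W x' t ω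
    set δ := |x - x'| with hδ
    have hAA : |A' - A| ≤ δ := by
      have := locA_lip (μ₀ := μ₀) (σ := σ) (W := W) x' x t ω
      rwa [abs_sub_comm x' x] at this
    set h := snr μ₀ μ₁ σ * W t ω - snr μ₀ μ₁ σ ^ 2 / 2 * t with hh
    set P := Real.exp (c * A - ρ * t)
    set Q := Real.exp (h + d * A)
    set M := Real.exp (|c| * δ)
    set N := Real.exp (|d| * δ)
    set r := max φ φ' / φ with hr
    have hδ0 : 0 ≤ δ := abs_nonneg _
    have hP' : Real.exp (c * A' - ρ * t) ≤ M * P := by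
      rw [← Real.exp_add]
      apply Real.exp_le_exp.2
      have h1 : c * (A' - A) ≤ |c| * δ := by
        refine le_trans (le_abs_self _) ?_
        rw [abs_mul]
        exact mul_le_mul_of_nonneg_left hAA (abs_nonneg c)
      have h2 : c * A' = c * A + c * (A' - A) := by ring
      linarith
    have hQ' : Real.exp (h + d * A') ≤ Q * N := by
      rw [← Real.exp_add]
      apply Real.exp_le_exp.2
      have h1 : d * (A' - A) ≤ |d| * δ := by
        refine le_trans (le_abs_self _) ?_
        rw [abs_mul]
        exact mul_le_mul_of_nonneg_left hAA (abs_nonneg d)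
      have h2 : d * A' = d * A + d * (A' - A) := by ring
      linarith
    have hr1 : (1:ℝ) ≤ r := (one_le_div hφ).2 (le_max_left φ φ')
    have hφr : φ' ≤ r * φ := by
      rw [hr, div_mul_cancel₀ _ hφ.ne']
      exact le_max_right φ φ'
    have hN1 : (1:ℝ) ≤ N := Real.one_le_exp (by positivity)
    have hPpos : 0 < P := Real.exp_pos _
    have hQpos : 0 < Q := Real.exp_pos _
    have hQ'pos : 0 < Real.exp (h + d * A') := Real.exp_pos _
    have hMpos : 0 < M := Real.exp_pos _
    have hMN : Real.exp (Kc μ₀ μ₁ σ * δ) = M * N := by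
      rw [← Real.exp_add]
      congr 1
      rw [Kc, ← hc, ← hd]
      ring
    rw [hMN]
    have key : 1 + φ' * Real.exp (h + d * A') ≤ N * r * (1 + φ * Q) := by
      have k1 : φ' * Real.exp (h + d * A') ≤ (r * φ) * (Q * N) :=
        mul_le_mul hφr hQ' hQ'pos.le (by positivity)
      have k2 : (1:ℝ) ≤ N * r :=
        le_trans (by norm_num) (mul_le_mul hN1 hr1 zero_le_one (by linarith))
      nlinarith [k1, k2]
    calc Real.exp (c * A' - ρ * t) * (1 + φ' * Real.exp (h + d * A'))
        ≤ (M * P) * (1 + φ' * Real.exp (h + d * A')) :=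
          mul_le_mul_of_nonneg_right hP' (by positivity)
      _ ≤ (M * P) * (N * r * (1 + φ * Q)) :=
          mul_le_mul_of_nonneg_left key (by positivity)
      _ = M * N * r * (P * (1 + φ * Q)) := by ring
  · rw [if_neg hτω, if_neg hτω, mul_zero]


/-! ### The set of achievable values -/

def VSet [mΩ : MeasurableSpace Ω] (P : Measure Ω) (F : Filtration ℝ mΩ)
    (μ₀ μ₁ σ ρ : ℝ) (W : ℝ → Ω → ℝ) (x φ : ℝ) : Set ℝ :=
  {r : ℝ | ∃ τ : Ω → ℝ≥0∞, IsStoppingTimeE F τ ∧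
    r = ∫ ω, gain μ₀ μ₁ σ ρ W x φ τ ω ∂P}

lemma valueU_eq [mΩ : MeasurableSpace Ω] (P : Measure Ω) (F : Filtration ℝ mΩ)
    (μ₀ μ₁ σ ρ : ℝ) (W : ℝ → Ω → ℝ) (x φ : ℝ) :
    valueU P F μ₀ μ₁ σ ρ W x φ = sSup (VSet P F μ₀ μ₁ σ ρ W x φ) := rfl

lemma zero_mem_VSet [mΩ : MeasurableSpace Ω] (P : Measure Ω) (F : Filtration ℝ mΩ)
    (μ₀ μ₁ σ ρ : ℝ) (W : ℝ → Ω → ℝ) (x φ : ℝ) :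
    (0:ℝ) ∈ VSet P F μ₀ μ₁ σ ρ W x φ := by
  refine ⟨fun _ => ⊤, ?_, ?_⟩
  · intro t
    have : {ω : Ω | (⊤:ℝ≥0∞) ≤ ENNReal.ofReal t} = ∅ := by
      ext ω; simp [top_le_iff, ENNReal.ofReal_ne_top]
    rw [this]
    exact @MeasurableSet.empty _ (F t)
  · have : (fun ω : Ω => gain μ₀ μ₁ σ ρ W x φ (fun _ => ⊤) ω) = fun _ => (0:ℝ) := by
      funext ω; simp [gain]
    rw [this, integral_zero]

lemma stoppingE_zero [mΩ : MeasurableSpace Ω] (F : Filtration ℝ mΩ) :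
    IsStoppingTimeE F (fun _ : Ω => (0:ℝ≥0∞)) := by
  intro t
  have : {ω : Ω | (0:ℝ≥0∞) ≤ ENNReal.ofReal t} = Set.univ := by ext; simp
  rw [this]
  exact MeasurableSet.univ

lemma runSup_zero {W : ℝ → Ω → ℝ} {μ₀ σ : ℝ} (hW0 : ∀ ω, W 0 ω = 0) (ω : Ω) :
    runSup μ₀ σ W 0 ω = 0 := by
  unfold runSup
  haveI : Nonempty (Set.Icc (0:ℝ) 0) := ⟨⟨0, by simp⟩⟩
  have hfun : (fun s : Set.Icc (0:ℝ) 0 => -μ₀ * (s:ℝ) - σ * W (s:ℝ) ω)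
      = fun _ => (0:ℝ) := by
    funext s
    have hs : (s : ℝ) = 0 := le_antisymm s.2.2 s.2.1
    rw [hs, hW0 ω]
    ring
  rw [hfun]
  exact ciSup_const

lemma gain_zero_eval [mΩ : MeasurableSpace Ω] {P : Measure Ω} {F : Filtration ℝ mΩ}
    {W : ℝ → Ω → ℝ} (hBM : IsBrownian P F W) (μ₀ μ₁ σ ρ x φ : ℝ) (ω : Ω) :
    gain μ₀ μ₁ σ ρ W x φ (fun _ => (0:ℝ≥0∞)) ω
      = Real.exp (2 * μ₀ / σ ^ 2 * (max x 0 - x))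
          * (1 + φ * Real.exp (2 * snr μ₀ μ₁ σ / σ * (max x 0 - x))) := by
  have h0 : ((0:ℝ≥0∞)).toReal = (0:ℝ) := rfl
  have hA : locA μ₀ σ W x ((0:ℝ≥0∞)).toReal ω = max x 0 - x := by
    rw [h0]
    unfold locA
    rw [runSup_zero hBM.start ω]
  rw [gain, if_pos (by simp : (0:ℝ≥0∞) < ⊤), Phihat, hA, h0, hBM.start ω]
  ring_nf

lemma base_mem_VSet [mΩ : MeasurableSpace Ω] {P : Measure Ω} {F : Filtration ℝ mΩ}
    {W : ℝ → Ω → ℝ} (hBM : IsBrownian P F W) (μ₀ μ₁ σ ρ x φ : ℝ) :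
    Real.exp (2 * μ₀ / σ ^ 2 * (max x 0 - x))
        * (1 + φ * Real.exp (2 * snr μ₀ μ₁ σ / σ * (max x 0 - x)))
      ∈ VSet P F μ₀ μ₁ σ ρ W x φ := by
  haveI := hBM.isProb
  refine ⟨fun _ => 0, stoppingE_zero F, ?_⟩
  have hfun : (fun ω : Ω => gain μ₀ μ₁ σ ρ W x φ (fun _ => (0:ℝ≥0∞)) ω)
      = fun _ : Ω => Real.exp (2 * μ₀ / σ ^ 2 * (max x 0 - x))
          * (1 + φ * Real.exp (2 * snr μ₀ μ₁ σ / σ * (max x 0 - x))) := by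
    funext ω
    exact gain_zero_eval hBM μ₀ μ₁ σ ρ x φ ω
  rw [hfun, integral_const, probReal_univ, one_smul]

/-- The comparison factor between the value sets at two parameter points. -/
def Lc (μ₀ μ₁ σ x x' φ φ' : ℝ) : ℝ :=
  Real.exp (Kc μ₀ μ₁ σ * |x - x'|) * (max φ φ' / φ)

lemma Lc_pos {μ₀ μ₁ σ x x' φ φ' : ℝ} (hφ : 0 < φ) (hφ' : 0 < φ') :
    0 < Lc μ₀ μ₁ σ x x' φ φ' := by
  apply mul_pos (Real.exp_pos _)
  exact div_pos (lt_of_lt_of_le hφ (le_max_left φ φ')) hφ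

lemma vset_le [mΩ : MeasurableSpace Ω] {P : Measure Ω} {F : Filtration ℝ mΩ}
    {W : ℝ → Ω → ℝ} (hBM : IsBrownian P F W) {μ₀ μ₁ σ ρ : ℝ} {x x' φ φ' : ℝ}
    (hφ : 0 < φ) (hφ' : 0 < φ')
    (hb : BddAbove (VSet P F μ₀ μ₁ σ ρ W x φ)) :
    ∀ r' ∈ VSet P F μ₀ μ₁ σ ρ W x' φ',
      r' ≤ Lc μ₀ μ₁ σ x x' φ φ' * sSup (VSet P F μ₀ μ₁ σ ρ W x φ) := by
  rintro r' ⟨τ, hτ, rfl⟩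
  have hL : 0 < Lc μ₀ μ₁ σ x x' φ φ' := Lc_pos hφ hφ'
  have hL' : 0 < Lc μ₀ μ₁ σ x' x φ' φ := Lc_pos hφ' hφ
  have hS0 : 0 ≤ sSup (VSet P F μ₀ μ₁ σ ρ W x φ) :=
    le_csSup hb (zero_mem_VSet P F μ₀ μ₁ σ ρ W x φ)
  by_cases hint : Integrable (gain μ₀ μ₁ σ ρ W x' φ' τ) P
  · have hmeas : Measurable (gain μ₀ μ₁ σ ρ W x φ τ) := gain_measurable hBM hτ
    have hdom : ∀ ω, gain μ₀ μ₁ σ ρ W x φ τ ω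
        ≤ Lc μ₀ μ₁ σ x' x φ' φ * gain μ₀ μ₁ σ ρ W x' φ' τ ω := by
      intro ω
      have := gain_le (μ₀ := μ₀) (μ₁ := μ₁) (σ := σ) (ρ := ρ) (W := W) hφ' hφ x' x τ ω
      simpa [Lc, mul_assoc] using this
    have hdom2 : ∀ ω, gain μ₀ μ₁ σ ρ W x' φ' τ ω
        ≤ Lc μ₀ μ₁ σ x x' φ φ' * gain μ₀ μ₁ σ ρ W x φ τ ω := by
      intro ω
      have := gain_le (μ₀ := μ₀) (μ₁ := μ₁) (σ := σ) (ρ := ρ) (W := W) hφ hφ' x x' τ ω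
      simpa [Lc, mul_assoc] using this
    have hint2 : Integrable (gain μ₀ μ₁ σ ρ W x φ τ) P := by
      refine (hint.const_mul (Lc μ₀ μ₁ σ x' x φ' φ)).mono'
        hmeas.aestronglyMeasurable ?_
      refine Filter.Eventually.of_forall fun ω => ?_
      rw [Real.norm_eq_abs, abs_of_nonneg (gain_nonneg hφ.le τ ω)]
      exact hdom ω
    have hle : ∫ ω, gain μ₀ μ₁ σ ρ W x' φ' τ ω ∂P
        ≤ Lc μ₀ μ₁ σ x x' φ φ' * ∫ ω, gain μ₀ μ₁ σ ρ W x φ τ ω ∂P := by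
      rw [← integral_const_mul]
      exact integral_mono hint (hint2.const_mul _) hdom2
    refine le_trans hle (mul_le_mul_of_nonneg_left ?_ hL.le)
    exact le_csSup hb ⟨τ, hτ, rfl⟩
  · rw [integral_undef hint]
    exact mul_nonneg hL.le hS0

lemma bddAbove_transfer [mΩ : MeasurableSpace Ω] {P : Measure Ω} {F : Filtration ℝ mΩ}
    {W : ℝ → Ω → ℝ} (hBM : IsBrownian P F W) {μ₀ μ₁ σ ρ : ℝ} {x x' φ φ' : ℝ}
    (hφ : 0 < φ) (hφ' : 0 < φ')
    (hb : BddAbove (VSet P F μ₀ μ₁ σ ρ W x φ)) :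
    BddAbove (VSet P F μ₀ μ₁ σ ρ W x' φ') :=
  ⟨_, fun r' hr' => vset_le hBM hφ hφ' hb r' hr'⟩

lemma sSup_transfer [mΩ : MeasurableSpace Ω] {P : Measure Ω} {F : Filtration ℝ mΩ}
    {W : ℝ → Ω → ℝ} (hBM : IsBrownian P F W) {μ₀ μ₁ σ ρ : ℝ} {x x' φ φ' : ℝ}
    (hφ : 0 < φ) (hφ' : 0 < φ')
    (hb : BddAbove (VSet P F μ₀ μ₁ σ ρ W x φ)) :
    sSup (VSet P F μ₀ μ₁ σ ρ W x' φ')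
      ≤ Lc μ₀ μ₁ σ x x' φ φ' * sSup (VSet P F μ₀ μ₁ σ ρ W x φ) :=
  Real.sSup_le (vset_le hBM hφ hφ' hb)
    (mul_nonneg (Lc_pos hφ hφ').le
      (le_csSup hb (zero_mem_VSet P F μ₀ μ₁ σ ρ W x φ)))

lemma valueU_continuousAt [mΩ : MeasurableSpace Ω] {P : Measure Ω} {F : Filtration ℝ mΩ}
    {W : ℝ → Ω → ℝ} (hBM : IsBrownian P F W) {μ₀ μ₁ σ ρ : ℝ}
    (hball : ∀ y ψ : ℝ, 0 < ψ → BddAbove (VSet P F μ₀ μ₁ σ ρ W y ψ))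
    {p : ℝ × ℝ} (hp : 0 < p.2) :
    ContinuousAt (fun q : ℝ × ℝ => sSup (VSet P F μ₀ μ₁ σ ρ W q.1 q.2)) p := by
  set v : ℝ × ℝ → ℝ := fun q => sSup (VSet P F μ₀ μ₁ σ ρ W q.1 q.2) with hv
  set K := Kc μ₀ μ₁ σ with hK
  set lo : ℝ × ℝ → ℝ := fun q =>
    v p / (Real.exp (K * |q.1 - p.1|) * (max q.2 p.2 / q.2)) with hlo
  set up : ℝ × ℝ → ℝ := fun q =>
    Real.exp (K * |p.1 - q.1|) * (max p.2 q.2 / p.2) * v p with hup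
  have hev : ∀ᶠ q : ℝ × ℝ in nhds p, 0 < q.2 := by
    have hopen : IsOpen {q : ℝ × ℝ | 0 < q.2} := isOpen_lt continuous_const continuous_snd
    exact Filter.eventually_of_mem (hopen.mem_nhds hp) fun q hq => hq
  have hub : ∀ q : ℝ × ℝ, 0 < q.2 → v q ≤ up q := by
    intro q hq
    exact sSup_transfer hBM hp hq (hball p.1 p.2 hp)
  have hlb : ∀ q : ℝ × ℝ, 0 < q.2 → lo q ≤ v q := by
    intro q hq
    have h1 : v p ≤ Real.exp (K * |q.1 - p.1|) * (max q.2 p.2 / q.2) * v q := by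
      have := sSup_transfer (x := q.1) (x' := p.1) hBM hq hp (hball q.1 q.2 hq)
      simpa [Lc, Kc, hK, mul_assoc] using this
    have hEpos : 0 < Real.exp (K * |q.1 - p.1|) * (max q.2 p.2 / q.2) := by
      apply mul_pos (Real.exp_pos _)
      exact div_pos (lt_of_lt_of_le hq (le_max_left _ _)) hq
    rw [hlo]
    rw [div_le_iff₀ hEpos]
    calc v p ≤ Real.exp (K * |q.1 - p.1|) * (max q.2 p.2 / q.2) * v q := h1
      _ = v q * (Real.exp (K * |q.1 - p.1|) * (max q.2 p.2 / q.2)) := by ring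
  rw [ContinuousAt]
  have hlo_tendsto : Filter.Tendsto lo (nhds p) (nhds (v p)) := by
    have hc : ContinuousAt lo p := by
      apply ContinuousAt.div continuousAt_const
      · apply ContinuousAt.mul
        · exact (Real.continuous_exp.continuousAt).comp
            ((continuousAt_const.mul (((continuous_fst.sub continuous_const).abs).continuousAt)))
        · exact ContinuousAt.div
            ((continuous_snd.max continuous_const).continuousAt) continuousAt_snd hp.ne'
      · have : Real.exp (K * |p.1 - p.1|) * (max p.2 p.2 / p.2) = 1 := by
          simp [div_self hp.ne']
        rw [this]; norm_num
    have hval : lo p = v p := by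
      rw [hlo]
      simp [div_self hp.ne']
    rw [← hval]
    exact hc
  have hup_tendsto : Filter.Tendsto up (nhds p) (nhds (v p)) := by
    have hc : ContinuousAt up p := by
      apply ContinuousAt.mul
      · apply ContinuousAt.mul
        · exact (Real.continuous_exp.continuousAt).comp
            ((continuousAt_const.mul (((continuous_const.sub continuous_fst).abs).continuousAt)))
        · exact ContinuousAt.div
            ((continuous_const.max continuous_snd).continuousAt) continuousAt_const hp.ne'
      · exact continuousAt_const
    have hval : up p = v p := by
      rw [hup]
      simp [div_self hp.ne']
    rw [← hval]
    exact hc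
  exact tendsto_of_tendsto_of_tendsto_of_le_of_le' hlo_tendsto hup_tendsto
    (hev.mono fun q hq => hlb q hq) (hev.mono fun q hq => hub q hq)

lemma gain_zero_le_one {W : ℝ → Ω → ℝ} {μ₀ μ₁ σ ρ x : ℝ} (hμ₀ : μ₀ ≤ 0) (hρ : 0 ≤ ρ)
    (τ : Ω → ℝ≥0∞) (ω : Ω) : gain μ₀ μ₁ σ ρ W x 0 τ ω ≤ 1 := by
  unfold gain Phihat
  split
  · have hσ2 : (0:ℝ) ≤ σ ^ 2 := sq_nonneg σ
    have hc : 2 * μ₀ / σ ^ 2 ≤ 0 := div_nonpos_iff.2 (Or.inr ⟨by linarith, hσ2⟩)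
    have hA : 0 ≤ locA μ₀ σ W x ((τ ω).toReal) ω := locA_nonneg
    have hexp : 2 * μ₀ / σ ^ 2 * locA μ₀ σ W x ((τ ω).toReal) ω - ρ * (τ ω).toReal ≤ 0 := by
      have h1 : 2 * μ₀ / σ ^ 2 * locA μ₀ σ W x ((τ ω).toReal) ω ≤ 0 :=
        mul_nonpos_iff.2 (Or.inr ⟨hc, hA⟩)
      have h2 : 0 ≤ ρ * (τ ω).toReal := mul_nonneg hρ ENNReal.toReal_nonneg
      linarith
    simp only [zero_mul, add_zero, mul_one]
    exact Real.exp_le_one_iff.2 hexp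
  · norm_num

lemma gain_phi_decomp {W : ℝ → Ω → ℝ} {μ₀ μ₁ σ ρ x φ : ℝ} (hφ : φ ≠ 0) (φ' : ℝ)
    (τ : Ω → ℝ≥0∞) (ω : Ω) :
    gain μ₀ μ₁ σ ρ W x φ' τ ω
      = gain μ₀ μ₁ σ ρ W x 0 τ ω
        + (φ' / φ) * (gain μ₀ μ₁ σ ρ W x φ τ ω - gain μ₀ μ₁ σ ρ W x 0 τ ω) := by
  unfold gain Phihat
  by_cases h : τ ω < ⊤
  · simp only [if_pos h]
    field_simp
    ring
  · simp only [if_neg h]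
    ring

end BrownAux

end AuxProof

noncomputable section

/-- Corollary 4.6: `C` is (relatively) open and `S` is (relatively) closed in
`[0,∞) × (0,∞)`, and `C` is connected in the `φ` variable. -/
theorem continuation_set_open_stopping_set_closed_connected
    {Ω : Type*} [mΩ : MeasurableSpace Ω] (P : Measure Ω) (F : Filtration ℝ mΩ)
    (W : ℝ → Ω → ℝ) (μ₀ μ₁ σ ρ : ℝ)
    (hμ₀ : μ₀ < 0) (hμ₁ : 0 < μ₁) (hσ : 0 < σ) (hρ : 0 < ρ)
    (hBM : IsBrownian P F W) :
    (∃ V : Set (ℝ × ℝ), IsOpen V ∧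
      contSet P F μ₀ μ₁ σ ρ W = V ∩ (Set.Ici (0:ℝ) ×ˢ Set.Ioi (0:ℝ))) ∧
    (∃ V : Set (ℝ × ℝ), IsClosed V ∧
      stopSet P F μ₀ μ₁ σ ρ W = V ∩ (Set.Ici (0:ℝ) ×ˢ Set.Ioi (0:ℝ))) ∧
    (∀ x φ φ' : ℝ, (x, φ) ∈ contSet P F μ₀ μ₁ σ ρ W → φ < φ' →
      (x, φ') ∈ contSet P F μ₀ μ₁ σ ρ W) := by
  classical
  haveI := hBM.isProb
  by_cases hb : BddAbove (BrownAux.VSet P F μ₀ μ₁ σ ρ W 0 1)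
  case neg =>
    have hub : ∀ y ψ : ℝ, 0 < ψ → ¬ BddAbove (BrownAux.VSet P F μ₀ μ₁ σ ρ W y ψ) := by
      intro y ψ hψ h
      exact hb (BrownAux.bddAbove_transfer hBM hψ one_pos h)
    have hv0 : ∀ y ψ : ℝ, 0 < ψ → valueU P F μ₀ μ₁ σ ρ W y ψ = 0 := by
      intro y ψ hψ
      rw [BrownAux.valueU_eq]
      exact Real.sSup_of_not_bddAbove (hub y ψ hψ)
    refine ⟨⟨∅, isOpen_empty, ?_⟩, ⟨∅, isClosed_empty, ?_⟩, ?_⟩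
    · rw [Set.empty_inter]
      ext p
      simp only [contSet, Set.mem_setOf_eq, Set.mem_empty_iff_false, iff_false, not_and]
      intro _ hφ
      rw [hv0 p.1 p.2 hφ]
      intro h
      linarith
    · rw [Set.empty_inter]
      ext p
      simp only [stopSet, Set.mem_setOf_eq, Set.mem_empty_iff_false, iff_false, not_and]
      intro _ hφ
      rw [hv0 p.1 p.2 hφ]
      intro h
      linarith
    · rintro x φ φ' ⟨hx, hφ, hlt⟩ hφφ'
      rw [hv0 x φ hφ] at hlt
      linarith
  case pos =>
    have hball : ∀ y ψ : ℝ, 0 < ψ → BddAbove (BrownAux.VSet P F μ₀ μ₁ σ ρ W y ψ) :=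
      fun y ψ hψ => BrownAux.bddAbove_transfer hBM one_pos hψ hb
    set v : ℝ × ℝ → ℝ := fun q => sSup (BrownAux.VSet P F μ₀ μ₁ σ ρ W q.1 q.2) with hv
    have hvc : ∀ p : ℝ × ℝ, 0 < p.2 → ContinuousAt v p :=
      fun p hp => BrownAux.valueU_continuousAt hBM hball hp
    have hUopen : IsOpen {p : ℝ × ℝ | 0 < p.2} := isOpen_lt continuous_const continuous_snd
    have hwU : ContinuousOn (fun p : ℝ × ℝ => v p - (1 + p.2)) {p : ℝ × ℝ | 0 < p.2} :=
      fun p hp => ((hvc p hp).sub (continuousAt_const.add continuousAt_snd)).continuousWithinAt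
    refine ⟨⟨{p : ℝ × ℝ | 0 < p.2} ∩ (fun p : ℝ × ℝ => v p - (1 + p.2)) ⁻¹' Set.Ioi 0,
        hwU.isOpen_inter_preimage hUopen isOpen_Ioi, ?_⟩,
      ⟨({p : ℝ × ℝ | 0 < p.2} ∩ (fun p : ℝ × ℝ => v p - (1 + p.2)) ⁻¹' {(0:ℝ)}ᶜ)ᶜ,
        (hwU.isOpen_inter_preimage hUopen isOpen_compl_singleton).isClosed_compl, ?_⟩, ?_⟩
    · ext p
      simp only [contSet, Set.mem_setOf_eq, Set.mem_inter_iff, Set.mem_preimage,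
        Set.mem_Ioi, Set.mem_prod, Set.mem_Ici]
      constructor
      · rintro ⟨hx, hφ, hlt⟩
        have hlt' : 1 + p.2 < v p := hlt
        exact ⟨⟨hφ, sub_pos.2 hlt'⟩, hx, hφ⟩
      · rintro ⟨⟨hφ, hpos⟩, hx, -⟩
        have : 1 + p.2 < v p := sub_pos.1 hpos
        exact ⟨hx, hφ, this⟩
    · ext p
      simp only [stopSet, Set.mem_setOf_eq, Set.mem_inter_iff, Set.mem_preimage,
        Set.mem_compl_iff, Set.mem_singleton_iff, Set.mem_prod, Set.mem_Ici, Set.mem_Ioi,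
        not_and, not_not]
      constructor
      · rintro ⟨hx, hφ, heq⟩
        have heq' : v p = 1 + p.2 := heq
        refine ⟨fun _ => ?_, hx, hφ⟩
        rw [heq']
        ring
      · rintro ⟨hcompl, hx, hφ⟩
        have hzero : v p - (1 + p.2) = 0 := hcompl hφ
        have : v p = 1 + p.2 := by linarith
        exact ⟨hx, hφ, this⟩
    · rintro x φ φ' ⟨hx, hφ, hlt⟩ hφφ'
      have hφ'pos : 0 < φ' := lt_trans hφ hφφ'
      have hbφ := hball x φ hφ
      have hlt' : 1 + φ < sSup (BrownAux.VSet P F μ₀ μ₁ σ ρ W x φ) := hlt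
      obtain ⟨r0, hrmem, hr⟩ : ∃ r0 ∈ BrownAux.VSet P F μ₀ μ₁ σ ρ W x φ, 1 + φ < r0 := by
        by_contra hcon
        push_neg at hcon
        have := Real.sSup_le hcon (by positivity)
        linarith
      obtain ⟨τ, hτ, rfl⟩ := hrmem
      have hg0 : ∀ ω, 0 ≤ gain μ₀ μ₁ σ ρ W x φ τ ω := BrownAux.gain_nonneg hφ.le τ
      have hint : Integrable (gain μ₀ μ₁ σ ρ W x φ τ) P := by
        by_contra hcon
        rw [integral_undef hcon] at hr
        linarith
      have hBmeas : Measurable (gain μ₀ μ₁ σ ρ W x 0 τ) := BrownAux.gain_measurable hBM hτ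
      have hB01 : ∀ ω, gain μ₀ μ₁ σ ρ W x 0 τ ω ≤ 1 :=
        BrownAux.gain_zero_le_one hμ₀.le hρ.le τ
      have hB0 : ∀ ω, 0 ≤ gain μ₀ μ₁ σ ρ W x 0 τ ω := BrownAux.gain_nonneg le_rfl τ
      have hintB : Integrable (gain μ₀ μ₁ σ ρ W x 0 τ) P := by
        refine (integrable_const (1:ℝ)).mono' hBmeas.aestronglyMeasurable ?_
        exact Filter.Eventually.of_forall fun ω => by
          rw [Real.norm_eq_abs, abs_of_nonneg (hB0 ω)]; exact hB01 ω
      have hdecomp : (fun ω => gain μ₀ μ₁ σ ρ W x φ' τ ω)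
          = fun ω => gain μ₀ μ₁ σ ρ W x 0 τ ω
              + (φ' / φ) * (gain μ₀ μ₁ σ ρ W x φ τ ω - gain μ₀ μ₁ σ ρ W x 0 τ ω) :=
        funext fun ω => BrownAux.gain_phi_decomp hφ.ne' φ' τ ω
      have hint' : Integrable (gain μ₀ μ₁ σ ρ W x φ' τ) P := by
        rw [show gain μ₀ μ₁ σ ρ W x φ' τ = fun ω => gain μ₀ μ₁ σ ρ W x 0 τ ω
              + (φ' / φ) * (gain μ₀ μ₁ σ ρ W x φ τ ω - gain μ₀ μ₁ σ ρ W x 0 τ ω) from hdecomp]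
        exact hintB.add ((hint.sub hintB).const_mul _)
      have hval : ∫ ω, gain μ₀ μ₁ σ ρ W x φ' τ ω ∂P
          = (∫ ω, gain μ₀ μ₁ σ ρ W x 0 τ ω ∂P)
            + (φ' / φ) * ((∫ ω, gain μ₀ μ₁ σ ρ W x φ τ ω ∂P)
                - ∫ ω, gain μ₀ μ₁ σ ρ W x 0 τ ω ∂P) := by
        have hsub : Integrable (fun ω => gain μ₀ μ₁ σ ρ W x φ τ ω
            - gain μ₀ μ₁ σ ρ W x 0 τ ω) P := hint.sub hintB
        have hmul : Integrable (fun ω => (φ' / φ) * (gain μ₀ μ₁ σ ρ W x φ τ ω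
            - gain μ₀ μ₁ σ ρ W x 0 τ ω)) P := hsub.const_mul _
        conv_lhs => rw [show (fun ω => gain μ₀ μ₁ σ ρ W x φ' τ ω)
          = fun ω => gain μ₀ μ₁ σ ρ W x 0 τ ω
              + (φ' / φ) * (gain μ₀ μ₁ σ ρ W x φ τ ω - gain μ₀ μ₁ σ ρ W x 0 τ ω) from hdecomp]
        rw [integral_add hintB hmul, integral_const_mul, integral_sub hint hintB]
      have hb0 : 0 ≤ ∫ ω, gain μ₀ μ₁ σ ρ W x 0 τ ω ∂P := integral_nonneg hB0
      have hb1 : (∫ ω, gain μ₀ μ₁ σ ρ W x 0 τ ω ∂P) ≤ 1 := by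
        calc (∫ ω, gain μ₀ μ₁ σ ρ W x 0 τ ω ∂P) ≤ ∫ _ω, (1:ℝ) ∂P :=
              integral_mono hintB (integrable_const 1) hB01
          _ = 1 := by simp
      have hq : 1 < φ' / φ := (one_lt_div hφ).2 hφφ'
      have hφ'eq : φ' / φ * φ = φ' := div_mul_cancel₀ _ hφ.ne'
      have hkey : 1 + φ' < (∫ ω, gain μ₀ μ₁ σ ρ W x 0 τ ω ∂P)
          + (φ' / φ) * ((∫ ω, gain μ₀ μ₁ σ ρ W x φ τ ω ∂P)
              - ∫ ω, gain μ₀ μ₁ σ ρ W x 0 τ ω ∂P) := by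
        set b := ∫ ω, gain μ₀ μ₁ σ ρ W x 0 τ ω ∂P
        set r := ∫ ω, gain μ₀ μ₁ σ ρ W x φ τ ω ∂P
        nlinarith [mul_lt_mul_of_pos_left (show 1 + φ - b < r - b by linarith)
            (show (0:ℝ) < φ'/φ by linarith),
          mul_nonneg (show (0:ℝ) ≤ φ'/φ - 1 by linarith)
            (show (0:ℝ) ≤ 1 - b by linarith), hφ'eq]
      refine ⟨hx, hφ'pos, ?_⟩
      have hmem' : (∫ ω, gain μ₀ μ₁ σ ρ W x φ' τ ω ∂P)
          ∈ BrownAux.VSet P F μ₀ μ₁ σ ρ W x φ' := ⟨τ, hτ, rfl⟩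
      have hlt2 : 1 + φ' < ∫ ω, gain μ₀ μ₁ σ ρ W x φ' τ ω ∂P := by
        rw [hval]; exact hkey
      exact lt_of_lt_of_le hlt2 (le_csSup (hball x φ' hφ'pos) hmem')

end
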